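/- arXiv:1905.03141 — 6 statements merged into one kernel-verified Lean document; each statement's English description precedes it below -/
import Mathlib

section
/- For every n ≥ 1, the maximum of ψ(t) = (2√n/(n+1))·√(t(n+1−t)) + |1 − 2t/(n+1)| over t ∈ [0, n+1] equals √(n+1), attained at t₋ = (n+1)/2 − √(n+1)/2 and t₊ = (n+1)/2 + √(n+1)/2. -/
set_option maxHeartbeats 1600000 in
theorem psi_max (n : ℕ) (hn : 1 ≤ n)
    (ψ : ℝ → ℝ)
    (hψ : ∀ t, ψ t = (2 * Real.sqrt n / (n + 1)) * Real.sqrt (t * (n + 1 - t))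
        + |1 - 2 * t / (n + 1)|)
    (tm tp : ℝ)
    (htm : tm = (n + 1) / 2 - Real.sqrt (n + 1) / 2)
    (htp : tp = (n + 1) / 2 + Real.sqrt (n + 1) / 2) :
    (∀ t ∈ Set.Icc (0 : ℝ) (n + 1), ψ t ≤ Real.sqrt (n + 1)) ∧
    tm ∈ Set.Icc (0 : ℝ) (n + 1) ∧ tp ∈ Set.Icc (0 : ℝ) (n + 1) ∧
    ψ tm = Real.sqrt (n + 1) ∧ ψ tp = Real.sqrt (n + 1) := by
  have hn1 : (1:ℝ) ≤ (n:ℝ) := by exact_mod_cast hn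
  have hN : (0:ℝ) < (n:ℝ) + 1 := by linarith
  have hsn : Real.sqrt n ^ 2 = (n:ℝ) := Real.sq_sqrt (by positivity)
  have hsn0 : 0 ≤ Real.sqrt n := Real.sqrt_nonneg _
  have hsN : Real.sqrt ((n:ℝ) + 1) ^ 2 = (n:ℝ) + 1 := Real.sq_sqrt (by positivity)
  have hsN0 : 0 ≤ Real.sqrt ((n:ℝ) + 1) := Real.sqrt_nonneg _
  have hsNle : Real.sqrt ((n:ℝ) + 1) ≤ (n:ℝ) + 1 := by nlinarith
  have hsNge : 0 < Real.sqrt ((n:ℝ) + 1) := by nlinarith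
  -- the bound
  have hbound : ∀ t ∈ Set.Icc (0 : ℝ) ((n:ℝ) + 1), ψ t ≤ Real.sqrt (n + 1) := by
    rintro t ⟨ht0, ht1⟩
    have hprod : 0 ≤ t * ((n:ℝ) + 1 - t) := mul_nonneg ht0 (by linarith)
    set s := Real.sqrt (t * ((n:ℝ) + 1 - t)) with hs_def
    have hs2 : s ^ 2 = t * ((n:ℝ) + 1 - t) := Real.sq_sqrt hprod
    have hs0 : 0 ≤ s := Real.sqrt_nonneg _
    set a := |1 - 2 * t / ((n:ℝ) + 1)| with ha_def
    have ha0 : 0 ≤ a := abs_nonneg _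
    have ha2 : a ^ 2 = (1 - 2 * t / ((n:ℝ) + 1)) ^ 2 := sq_abs _
    have hkey : (2 * s / ((n:ℝ) + 1)) ^ 2 + a ^ 2 = 1 := by
      rw [ha2]
      field_simp
      nlinarith [hs2]
    have hψt : ψ t = Real.sqrt n * (2 * s / ((n:ℝ) + 1)) + a := by
      rw [hψ t]; push_cast; ring
    rw [hψt]
    have hx0 : 0 ≤ 2 * s / ((n:ℝ) + 1) := by positivity
    have hsq : (Real.sqrt n * (2 * s / ((n:ℝ) + 1)) + a) ^ 2 ≤ (n:ℝ) + 1 := by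
      nlinarith [sq_nonneg (Real.sqrt n * a - 2 * s / ((n:ℝ) + 1)), hkey]
    have hLHS0 : 0 ≤ Real.sqrt n * (2 * s / ((n:ℝ) + 1)) + a := by positivity
    calc Real.sqrt n * (2 * s / ((n:ℝ) + 1)) + a
        = Real.sqrt ((Real.sqrt n * (2 * s / ((n:ℝ) + 1)) + a) ^ 2) :=
          (Real.sqrt_sq hLHS0).symm
      _ ≤ Real.sqrt ((n:ℝ) + 1) := Real.sqrt_le_sqrt hsq
  refine ⟨by exact_mod_cast hbound, ?_, ?_, ?_, ?_⟩
  · rw [Set.mem_Icc, htm]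
    constructor
    · linarith [hsNle]
    · linarith [hsN0]
  · rw [Set.mem_Icc, htp]
    constructor
    · linarith [hsN0]
    · linarith [hsNle]
  · rw [hψ tm]
    have h1 : tm * ((n:ℝ) + 1 - tm) = (Real.sqrt ((n:ℝ)+1) * Real.sqrt n / 2) ^ 2 := by
      rw [htm]; push_cast; nlinarith [hsN, hsn]
    have h2 : Real.sqrt (tm * ((n:ℝ) + 1 - tm)) = Real.sqrt ((n:ℝ)+1) * Real.sqrt n / 2 := by
      push_cast
      rw [h1, Real.sqrt_sq (by positivity)]
    push_cast
    rw [h2]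
    have h3 : 1 - 2 * tm / ((n:ℝ) + 1) = Real.sqrt ((n:ℝ)+1) / ((n:ℝ)+1) := by
      rw [htm]; field_simp; ring
    rw [h3, abs_of_nonneg (by positivity)]
    have e : 2 * Real.sqrt n / ((n:ℝ) + 1) * (Real.sqrt ((n:ℝ)+1) * Real.sqrt n / 2)
        + Real.sqrt ((n:ℝ)+1) / ((n:ℝ)+1)
        = (Real.sqrt n ^ 2 * Real.sqrt ((n:ℝ)+1) + Real.sqrt ((n:ℝ)+1)) / ((n:ℝ)+1) := by
      ring
    rw [e, hsn, div_eq_iff hN.ne']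
    ring
  · rw [hψ tp]
    have h1 : tp * ((n:ℝ) + 1 - tp) = (Real.sqrt ((n:ℝ)+1) * Real.sqrt n / 2) ^ 2 := by
      rw [htp]; push_cast; nlinarith [hsN, hsn]
    have h2 : Real.sqrt (tp * ((n:ℝ) + 1 - tp)) = Real.sqrt ((n:ℝ)+1) * Real.sqrt n / 2 := by
      push_cast
      rw [h1, Real.sqrt_sq (by positivity)]
    push_cast
    rw [h2]
    have h3 : 1 - 2 * tp / ((n:ℝ) + 1) = -(Real.sqrt ((n:ℝ)+1) / ((n:ℝ)+1)) := by
      rw [htp]; field_simp; ring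
    rw [h3, abs_neg, abs_of_nonneg (by positivity)]
    have e : 2 * Real.sqrt n / ((n:ℝ) + 1) * (Real.sqrt ((n:ℝ)+1) * Real.sqrt n / 2)
        + Real.sqrt ((n:ℝ)+1) / ((n:ℝ)+1)
        = (Real.sqrt n ^ 2 * Real.sqrt ((n:ℝ)+1) + Real.sqrt ((n:ℝ)+1)) / ((n:ℝ)+1) := by
      ring
    rw [e, hsn, div_eq_iff hN.ne']
    ring
end

section
/- For every integer n ≥ 1, the maximum over integers k with 1 ≤ k ≤ (n+1)/2 of ψ(k) = (2√n/(n+1))·√(k(n+1−k)) + 1 − 2k/(n+1) equals max{ψ(a), ψ(a+1)}, where a = ⌊(n+1)/2 − √(n+1)/2⌋. -/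
private lemma sqrt_aux_le (N x : ℝ) (hN : 1 ≤ N) (hx : 0 ≤ x)
    (hxt : 2*x ≤ (N+1) - Real.sqrt (N+1)) :
    Real.sqrt (x*(N+1-x)) ≤ Real.sqrt N * (N+1-2*x) / 2 := by
  have h0 : (0:ℝ) ≤ N + 1 := by linarith
  have hs2 : Real.sqrt (N+1) ^ 2 = N + 1 := Real.sq_sqrt h0
  have hs0 : 0 ≤ Real.sqrt (N+1) := Real.sqrt_nonneg _
  have hn0 : 0 ≤ Real.sqrt N := Real.sqrt_nonneg _
  have hn2 : Real.sqrt N ^ 2 = N := Real.sq_sqrt (by linarith)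
  have hq : Real.sqrt (N+1) ≤ N+1-2*x := by linarith
  have hq2 : N+1 ≤ (N+1-2*x)^2 := by nlinarith [hq, hs0, hs2]
  have hRnn : 0 ≤ Real.sqrt N * (N+1-2*x) / 2 :=
    div_nonneg (mul_nonneg hn0 (by linarith)) (by norm_num)
  have e : (Real.sqrt N * (N+1-2*x)/2)^2 = N * (N+1-2*x)^2/4 := by
    rw [div_pow, mul_pow, hn2]; norm_num
  have key : x*(N+1-x) ≤ (Real.sqrt N * (N+1-2*x) / 2)^2 := by
    rw [e]; nlinarith [hq2, h0]
  calc Real.sqrt (x*(N+1-x)) ≤ Real.sqrt ((Real.sqrt N * (N+1-2*x) / 2)^2) :=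
        Real.sqrt_le_sqrt key
    _ = Real.sqrt N * (N+1-2*x) / 2 := Real.sqrt_sq hRnn

private lemma sqrt_aux_ge (N x : ℝ) (hN : 1 ≤ N)
    (hxt : (N+1) - Real.sqrt (N+1) ≤ 2*x) (hxm : 2*x ≤ N+1) :
    Real.sqrt N * (N+1-2*x) / 2 ≤ Real.sqrt (x*(N+1-x)) := by
  have h0 : (0:ℝ) ≤ N + 1 := by linarith
  have hs2 : Real.sqrt (N+1) ^ 2 = N + 1 := Real.sq_sqrt h0
  have hs0 : 0 ≤ Real.sqrt (N+1) := Real.sqrt_nonneg _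
  have hn0 : 0 ≤ Real.sqrt N := Real.sqrt_nonneg _
  have hn2 : Real.sqrt N ^ 2 = N := Real.sq_sqrt (by linarith)
  have hq : N+1-2*x ≤ Real.sqrt (N+1) := by linarith
  have hq0 : 0 ≤ N+1-2*x := by linarith
  have hq2 : (N+1-2*x)^2 ≤ N+1 := by nlinarith [hq, hq0, hs2]
  have hL0 : 0 ≤ Real.sqrt N * (N+1-2*x)/2 :=
    div_nonneg (mul_nonneg hn0 hq0) (by norm_num)
  have e : (Real.sqrt N * (N+1-2*x)/2)^2 = N * (N+1-2*x)^2/4 := by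
    rw [div_pow, mul_pow, hn2]; norm_num
  have key : (Real.sqrt N * (N+1-2*x)/2)^2 ≤ x*(N+1-x) := by
    rw [e]; nlinarith [hq2, h0]
  calc Real.sqrt N * (N+1-2*x)/2 = Real.sqrt ((Real.sqrt N * (N+1-2*x)/2)^2) :=
        (Real.sqrt_sq hL0).symm
    _ ≤ Real.sqrt (x*(N+1-x)) := Real.sqrt_le_sqrt key

private lemma mono_incr (N s t : ℝ) (hN : 1 ≤ N) (hs : 0 ≤ s) (hst : s ≤ t)
    (ht : 2*t ≤ (N+1) - Real.sqrt (N+1)) :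
    2*Real.sqrt N/(N+1) * Real.sqrt (s*(N+1-s)) + (1 - 2*s/(N+1)) ≤
    2*Real.sqrt N/(N+1) * Real.sqrt (t*(N+1-t)) + (1 - 2*t/(N+1)) := by
  rcases eq_or_lt_of_le hst with rfl | hst'
  · exact le_refl _
  have h0 : (0:ℝ) ≤ N + 1 := by linarith
  have hs0 : 0 ≤ Real.sqrt (N+1) := Real.sqrt_nonneg _
  have hs2' : Real.sqrt (N+1) ^ 2 = N+1 := Real.sq_sqrt h0
  have hslt1 : 1 ≤ Real.sqrt (N+1) := by nlinarith [hs2', hs0]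
  have htpos : 0 < t := lt_of_le_of_lt hs hst'
  have hNt : 0 < N+1-t := by linarith
  set A := Real.sqrt (s*(N+1-s)) with hA
  set B := Real.sqrt (t*(N+1-t)) with hB
  have hA0 : 0 ≤ A := Real.sqrt_nonneg _
  have hBpos : 0 < B := Real.sqrt_pos.mpr (mul_pos htpos hNt)
  have hA2 : A^2 = s*(N+1-s) := Real.sq_sqrt (mul_nonneg hs (by linarith))
  have hB2 : B^2 = t*(N+1-t) := Real.sq_sqrt (le_of_lt (mul_pos htpos hNt))
  have hPA : A ≤ Real.sqrt N * (N+1-2*s)/2 := sqrt_aux_le N s hN hs (by linarith)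
  have hPB : B ≤ Real.sqrt N * (N+1-2*t)/2 := sqrt_aux_le N t hN (le_of_lt htpos) ht
  have hABpos : 0 < A + B := by linarith
  have hkey : t - s ≤ Real.sqrt N * (B - A) := by
    have hprodeq : (B-A)*(A+B) = (t-s)*(N+1-s-t) := by
      linear_combination hB2 - hA2
    have hprod : (Real.sqrt N*(B-A))*(A+B) = Real.sqrt N*((t-s)*(N+1-s-t)) := by
      calc (Real.sqrt N*(B-A))*(A+B) = Real.sqrt N*((B-A)*(A+B)) := by ring
        _ = Real.sqrt N*((t-s)*(N+1-s-t)) := by rw [hprodeq]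
    have hsum : A + B ≤ Real.sqrt N*(N+1-s-t) := by linarith [hPA, hPB]
    have h2 : (t-s)*(A+B) ≤ (Real.sqrt N*(B-A))*(A+B) := by
      rw [hprod]
      calc (t-s)*(A+B) ≤ (t-s)*(Real.sqrt N*(N+1-s-t)) :=
            mul_le_mul_of_nonneg_left hsum (by linarith)
        _ = Real.sqrt N*((t-s)*(N+1-s-t)) := by ring
    exact le_of_mul_le_mul_right h2 hABpos
  have hd : 2*Real.sqrt N/(N+1)*B - 2*Real.sqrt N/(N+1)*A - (2*t/(N+1) - 2*s/(N+1))
      = (2/(N+1)) * (Real.sqrt N*(B-A) - (t-s)) := by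
    field_simp
  have hnn : 0 ≤ (2/(N+1)) * (Real.sqrt N*(B-A) - (t-s)) :=
    mul_nonneg (by positivity) (by linarith)
  linarith [hd, hnn]

private lemma mono_decr (N s t : ℝ) (hN : 1 ≤ N)
    (hts : (N+1) - Real.sqrt (N+1) ≤ 2*s) (hst : s ≤ t) (ht : 2*t ≤ N+1) :
    2*Real.sqrt N/(N+1) * Real.sqrt (t*(N+1-t)) + (1 - 2*t/(N+1)) ≤
    2*Real.sqrt N/(N+1) * Real.sqrt (s*(N+1-s)) + (1 - 2*s/(N+1)) := by
  have h0 : (0:ℝ) ≤ N + 1 := by linarith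
  have hs0 : 0 ≤ Real.sqrt (N+1) := Real.sqrt_nonneg _
  have hs2' : Real.sqrt (N+1) ^ 2 = N+1 := Real.sq_sqrt h0
  have hslt1 : 1 ≤ Real.sqrt (N+1) := by nlinarith [hs2', hs0]
  have hsltself : Real.sqrt (N+1) < N+1 := by nlinarith [hs2', hslt1]
  have hspos : 0 < s := by linarith
  have hNs : 0 < N+1-s := by linarith
  have hNt : 0 ≤ N+1-t := by linarith
  set A := Real.sqrt (s*(N+1-s)) with hA
  set B := Real.sqrt (t*(N+1-t)) with hB
  have hB0 : 0 ≤ B := Real.sqrt_nonneg _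
  have hApos : 0 < A := Real.sqrt_pos.mpr (mul_pos hspos hNs)
  have hA2 : A^2 = s*(N+1-s) := Real.sq_sqrt (le_of_lt (mul_pos hspos hNs))
  have hB2 : B^2 = t*(N+1-t) := Real.sq_sqrt (mul_nonneg (by linarith) hNt)
  have hPA : Real.sqrt N * (N+1-2*s)/2 ≤ A := sqrt_aux_ge N s hN hts (by linarith)
  have hPB : Real.sqrt N * (N+1-2*t)/2 ≤ B := sqrt_aux_ge N t hN (by linarith) ht
  have hABpos : 0 < A + B := by linarith
  have hkey : Real.sqrt N * (B - A) ≤ t - s := by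
    have hprodeq : (B-A)*(A+B) = (t-s)*(N+1-s-t) := by
      linear_combination hB2 - hA2
    have hprod : (Real.sqrt N*(B-A))*(A+B) = Real.sqrt N*((t-s)*(N+1-s-t)) := by
      calc (Real.sqrt N*(B-A))*(A+B) = Real.sqrt N*((B-A)*(A+B)) := by ring
        _ = Real.sqrt N*((t-s)*(N+1-s-t)) := by rw [hprodeq]
    have hsum : Real.sqrt N*(N+1-s-t) ≤ A + B := by linarith [hPA, hPB]
    have h2 : (Real.sqrt N*(B-A))*(A+B) ≤ (t-s)*(A+B) := by
      rw [hprod]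
      calc Real.sqrt N*((t-s)*(N+1-s-t)) = (t-s)*(Real.sqrt N*(N+1-s-t)) := by ring
        _ ≤ (t-s)*(A+B) := mul_le_mul_of_nonneg_left hsum (by linarith)
    exact le_of_mul_le_mul_right h2 hABpos
  have hd : 2*Real.sqrt N/(N+1)*B - 2*Real.sqrt N/(N+1)*A - (2*t/(N+1) - 2*s/(N+1))
      = (2/(N+1)) * (Real.sqrt N*(B-A) - (t-s)) := by
    field_simp
  have hnp : (2/(N+1)) * (Real.sqrt N*(B-A) - (t-s)) ≤ 0 :=
    mul_nonpos_of_nonneg_of_nonpos (by positivity) (by linarith)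
  linarith [hd, hnp]

theorem max_over_integers (n : ℕ) (hn : 1 ≤ n)
    (ψ : ℝ → ℝ)
    (hψ : ∀ t, ψ t = (2 * Real.sqrt n / (n + 1)) * Real.sqrt (t * (n + 1 - t))
        + |1 - 2 * t / (n + 1)|)
    (a : ℤ) (ha : a = ⌊((n : ℝ) + 1) / 2 - Real.sqrt (n + 1) / 2⌋) :
    IsGreatest {s : ℝ | ∃ k : ℤ, 1 ≤ k ∧ (k : ℝ) ≤ (n + 1) / 2 ∧ s = ψ k}
      (max (ψ a) (ψ (a + 1))) := by
  have hN : (1:ℝ) ≤ (n:ℝ) := by exact_mod_cast hn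
  set N : ℝ := (n:ℝ) with hNdef
  have h0 : (0:ℝ) ≤ N + 1 := by linarith
  have hs2 : Real.sqrt (N+1) ^ 2 = N+1 := Real.sq_sqrt h0
  have hs0 : 0 ≤ Real.sqrt (N+1) := Real.sqrt_nonneg _
  have hslt1 : 1 ≤ Real.sqrt (N+1) := by nlinarith [hs2, hs0]
  have hsltself : Real.sqrt (N+1) < N+1 := by nlinarith [hs2, hslt1]
  -- floor facts
  have hafl : (a:ℝ) ≤ (N+1)/2 - Real.sqrt (N+1)/2 := by
    rw [ha]; exact Int.floor_le _
  have haflt : (N+1)/2 - Real.sqrt (N+1)/2 < (a:ℝ) + 1 := by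
    rw [ha]; exact Int.lt_floor_add_one _
  have ha0 : 0 ≤ a := by
    rw [ha]
    exact Int.le_floor.mpr (by push_cast; linarith)
  have ha0' : (0:ℝ) ≤ (a:ℝ) := by exact_mod_cast ha0
  have ha1le : (a:ℝ) + 1 ≤ (N+1)/2 := by
    rcases le_or_gt 2 (Real.sqrt (N+1)) with h | h
    · linarith
    · have ha1 : (a:ℝ) < 1 := by nlinarith [hs2]
      have haz : a < 1 := by exact_mod_cast ha1
      have : a = 0 := le_antisymm (by omega) ha0
      rw [this]
      push_cast
      linarith
  -- ψ without absolute value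
  have habs : ∀ t : ℝ, t ≤ (N+1)/2 →
      ψ t = 2*Real.sqrt N/(N+1) * Real.sqrt (t*(N+1-t)) + (1 - 2*t/(N+1)) := by
    intro t htm
    rw [hψ t, abs_of_nonneg]
    have h1 : 2*t/(N+1) ≤ 1 := by
      rw [div_le_one (by linarith)]; linarith
    linarith
  have halem : (a:ℝ) ≤ (N+1)/2 := by linarith
  constructor
  · -- membership
    rcases eq_or_lt_of_le ha0 with haz | hap
    · -- a = 0
      have haz' : a = 0 := haz.symm
      subst haz'
      have hc0 : ((0:ℤ):ℝ) = (0:ℝ) := by norm_num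
      have hψ0 : ψ ((0:ℤ):ℝ) = 1 := by
        rw [hc0, hψ 0]
        simp
      have hψ1 : (1:ℝ) ≤ ψ (((0:ℤ):ℝ) + 1) := by
        rw [hc0, zero_add, hψ 1]
        have e1 : (1:ℝ)*(N+1-1) = N := by ring
        rw [e1]
        have e2 : 2*Real.sqrt N/(N+1) * Real.sqrt N = 2*N/(N+1) := by
          rw [div_mul_eq_mul_div, mul_assoc, Real.mul_self_sqrt (by linarith : (0:ℝ) ≤ N)]
        rw [e2]
        have e3 : (1:ℝ) ≤ 2*N/(N+1) := by
          rw [le_div_iff₀ (by linarith)]; linarith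
        have := abs_nonneg (1 - 2*1/(N+1))
        linarith
      rw [max_eq_right (by linarith [hψ0, hψ1])]
      refine ⟨1, le_refl _, by push_cast; linarith, by norm_num⟩
    · -- 1 ≤ a
      have hap1 : 1 ≤ a := hap
      have hap1' : (1:ℝ) ≤ (a:ℝ) := by exact_mod_cast hap1
      rcases le_total (ψ (a:ℝ)) (ψ ((a:ℝ)+1)) with hle | hle
      · rw [max_eq_right hle]
        exact ⟨a+1, by omega, by push_cast; linarith, by norm_cast⟩
      · rw [max_eq_left hle]
        exact ⟨a, hap1, halem, rfl⟩
  · -- upper bound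
    rintro s ⟨k, hk1, hkm, rfl⟩
    have hk1' : (1:ℝ) ≤ (k:ℝ) := by exact_mod_cast hk1
    rcases le_or_gt k a with hka | hka
    · -- k ≤ a : ψ k ≤ ψ a
      have hka' : (k:ℝ) ≤ (a:ℝ) := by exact_mod_cast hka
      have hmono := mono_incr N (k:ℝ) (a:ℝ) hN (by linarith) hka' (by linarith)
      have h1 : ψ (k:ℝ) = 2*Real.sqrt N/(N+1) * Real.sqrt ((k:ℝ)*(N+1-(k:ℝ))) + (1 - 2*(k:ℝ)/(N+1)) :=
        habs _ hkm
      have h2 : ψ (a:ℝ) = 2*Real.sqrt N/(N+1) * Real.sqrt ((a:ℝ)*(N+1-(a:ℝ))) + (1 - 2*(a:ℝ)/(N+1)) :=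
        habs _ halem
      calc ψ (k:ℝ) ≤ ψ (a:ℝ) := by rw [h1, h2]; exact hmono
        _ ≤ max (ψ (a:ℝ)) (ψ ((a:ℝ)+1)) := le_max_left _ _
    · -- a + 1 ≤ k : ψ k ≤ ψ (a+1)
      have hak : (a:ℝ) + 1 ≤ (k:ℝ) := by exact_mod_cast hka
      have hmono := mono_decr N ((a:ℝ)+1) (k:ℝ) hN (by linarith) hak (by linarith)
      have h1 : ψ (k:ℝ) = 2*Real.sqrt N/(N+1) * Real.sqrt ((k:ℝ)*(N+1-(k:ℝ))) + (1 - 2*(k:ℝ)/(N+1)) :=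
        habs _ hkm
      have h2 : ψ ((a:ℝ)+1) = 2*Real.sqrt N/(N+1) * Real.sqrt (((a:ℝ)+1)*(N+1-((a:ℝ)+1))) + (1 - 2*((a:ℝ)+1)/(N+1)) :=
        habs _ ha1le
      calc ψ (k:ℝ) ≤ ψ ((a:ℝ)+1) := by rw [h1, h2]; exact hmono
        _ ≤ max (ψ (a:ℝ)) (ψ ((a:ℝ)+1)) := le_max_right _ _
end

section
/- For every integer n ≥ 1, max{ψ(a), ψ(a+1)} ≤ √(n+1), where a = ⌊(n+1)/2 − √(n+1)/2⌋ and ψ(t) = (2√n/(n+1))·√(t(n+1−t)) + |1 − 2t/(n+1)|. -/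
lemma psi_aux (n : ℕ) (hn : 1 ≤ n) (t : ℝ) (h0 : 0 ≤ t) (h1 : t ≤ (n : ℝ) + 1) :
    (2 * Real.sqrt n / (n + 1)) * Real.sqrt (t * (n + 1 - t))
        + |1 - 2 * t / (n + 1)| ≤ Real.sqrt (n + 1) := by
  have hN : (0 : ℝ) < (n : ℝ) + 1 := by positivity
  set s := Real.sqrt (t * (n + 1 - t)) with hs_def
  have hs : s ^ 2 = t * (n + 1 - t) := Real.sq_sqrt (by nlinarith)
  have hs0 : 0 ≤ s := Real.sqrt_nonneg _
  have hn2 : (Real.sqrt n) ^ 2 = n := Real.sq_sqrt (by positivity)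
  have hn0 : 0 ≤ Real.sqrt n := Real.sqrt_nonneg _
  have hsN : (Real.sqrt ((n : ℝ) + 1)) ^ 2 = (n : ℝ) + 1 := Real.sq_sqrt (le_of_lt hN)
  have hsN0 : 0 ≤ Real.sqrt ((n : ℝ) + 1) := Real.sqrt_nonneg _
  set w := |(n : ℝ) + 1 - 2 * t| with hw_def
  have hw0 : 0 ≤ w := abs_nonneg _
  have hw2 : w ^ 2 = ((n : ℝ) + 1 - 2 * t) ^ 2 := sq_abs _
  -- key inequality cleared of denominators
  have key : 2 * Real.sqrt n * s + w ≤ ((n : ℝ) + 1) * Real.sqrt ((n : ℝ) + 1) := by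
    have ha0 : 0 ≤ 2 * Real.sqrt n * s + w := by positivity
    have hb0 : 0 ≤ ((n : ℝ) + 1) * Real.sqrt ((n : ℝ) + 1) := by positivity
    have hsq : (2 * Real.sqrt n * s + w) ^ 2 ≤ (((n : ℝ) + 1) * Real.sqrt ((n : ℝ) + 1)) ^ 2 := by
      have h4 : 4 * s ^ 2 + ((n : ℝ) + 1 - 2 * t) ^ 2 = ((n : ℝ) + 1) ^ 2 := by
        rw [hs]; ring
      nlinarith [sq_nonneg (2 * s - Real.sqrt n * w)]
    calc 2 * Real.sqrt n * s + w = Real.sqrt ((2 * Real.sqrt n * s + w) ^ 2) :=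
          (Real.sqrt_sq ha0).symm
      _ ≤ Real.sqrt ((((n : ℝ) + 1) * Real.sqrt ((n : ℝ) + 1)) ^ 2) := Real.sqrt_le_sqrt hsq
      _ = ((n : ℝ) + 1) * Real.sqrt ((n : ℝ) + 1) := Real.sqrt_sq hb0
  have hv : |1 - 2 * t / ((n : ℝ) + 1)| = w / ((n : ℝ) + 1) := by
    have h : 1 - 2 * t / ((n : ℝ) + 1) = ((n : ℝ) + 1 - 2 * t) / ((n : ℝ) + 1) := by
      field_simp
    rw [h, abs_div, abs_of_pos hN, hw_def]
  rw [hv, show 2 * Real.sqrt (n : ℝ) / ((n : ℝ) + 1) * s + w / ((n : ℝ) + 1)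
      = (2 * Real.sqrt (n : ℝ) * s + w) / ((n : ℝ) + 1) from by ring, div_le_iff₀ hN]
  nlinarith [key]

theorem max_psi_le_sqrt (n : ℕ) (hn : 1 ≤ n)
    (ψ : ℝ → ℝ)
    (hψ : ∀ t, ψ t = (2 * Real.sqrt n / (n + 1)) * Real.sqrt (t * (n + 1 - t))
        + |1 - 2 * t / (n + 1)|)
    (a : ℤ) (ha : a = ⌊((n : ℝ) + 1) / 2 - Real.sqrt (n + 1) / 2⌋) :
    max (ψ a) (ψ (a + 1)) ≤ Real.sqrt (n + 1) := by
  have hN : (0 : ℝ) < (n : ℝ) + 1 := by positivity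
  have hsN : (Real.sqrt ((n : ℝ) + 1)) ^ 2 = (n : ℝ) + 1 := Real.sq_sqrt (le_of_lt hN)
  have hsN0 : 0 ≤ Real.sqrt ((n : ℝ) + 1) := Real.sqrt_nonneg _
  have hn1 : (1 : ℝ) ≤ (n : ℝ) := by exact_mod_cast hn
  have hle : Real.sqrt ((n : ℝ) + 1) ≤ (n : ℝ) + 1 := by nlinarith
  have ha0 : (0 : ℤ) ≤ a := by
    rw [ha]; exact Int.le_floor.mpr (by push_cast; nlinarith)
  have ha0' : (0 : ℝ) ≤ (a : ℝ) := by exact_mod_cast ha0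
  have haub : (a : ℝ) ≤ ((n : ℝ) + 1) / 2 - Real.sqrt ((n : ℝ) + 1) / 2 := by
    rw [ha]; exact Int.floor_le _
  have hub : (a : ℝ) + 1 ≤ (n : ℝ) + 1 := by nlinarith
  have h1 := psi_aux n hn (a : ℝ) ha0' (by linarith)
  have h2 := psi_aux n hn ((a : ℝ) + 1) (by linarith) hub
  rw [hψ, hψ]
  push_cast
  exact max_le h1 h2
end

section
/- For every integer n ≥ 2, max{ψ(a), ψ(a+1)} > √n, where a = ⌊(n+1)/2 − √(n+1)/2⌋ and ψ(t) = (2√n/(n+1))·√(t(n+1−t)) + |1 − 2t/(n+1)|. -/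
lemma key_aux (c u : ℝ) (hc : 1 < c) (hu0 : 0 < u) (hu1 : u ≤ 1)
    (hlt : (c ^ 2 + 1) * u < 2 * c) :
    c < c * Real.sqrt (1 - u ^ 2) + u := by
  have h1 : u < c := lt_of_le_of_lt hu1 hc
  have hnn : (0:ℝ) ≤ 1 - u ^ 2 := by nlinarith
  have hsq : (c - u) ^ 2 < c ^ 2 * (1 - u ^ 2) := by nlinarith
  have h2 : c - u < c * Real.sqrt (1 - u ^ 2) := by
    have h3 := Real.sqrt_lt_sqrt (sq_nonneg (c - u)) hsq
    rwa [Real.sqrt_sq (by linarith), Real.sqrt_mul (by positivity),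
      Real.sqrt_sq (by positivity)] at h3
  linarith

lemma psi_gt (n : ℕ) (hn : 2 ≤ n) (t : ℝ) (ht : 0 ≤ t)
    (h1 : 0 < (n:ℝ) + 1 - 2 * t) (h2 : (n:ℝ) + 1 - 2 * t < 2 * Real.sqrt n) :
    Real.sqrt n < (2 * Real.sqrt n / ((n:ℝ) + 1)) * Real.sqrt (t * ((n:ℝ) + 1 - t))
      + |1 - 2 * t / ((n:ℝ) + 1)| := by
  have hn2 : (2:ℝ) ≤ (n:ℝ) := by exact_mod_cast hn
  set N : ℝ := (n:ℝ) + 1 with hNdef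
  have hN : 0 < N := by linarith
  set u : ℝ := (N - 2 * t) / N with hudef
  have hu0 : 0 < u := div_pos h1 hN
  have hueq : 1 - 2 * t / N = u := by rw [hudef]; field_simp
  have hu1 : u ≤ 1 := by
    rw [hudef, div_le_one hN]; linarith
  have hc : 1 < Real.sqrt n := by
    have := Real.sqrt_lt_sqrt (by norm_num : (0:ℝ) ≤ 1) (by linarith : (1:ℝ) < (n:ℝ))
    simpa using this
  have hc2 : Real.sqrt n ^ 2 = (n:ℝ) := Real.sq_sqrt (by positivity)
  have hNu : N * u = N - 2 * t := by rw [hudef]; field_simp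
  have hlt : (Real.sqrt n ^ 2 + 1) * u < 2 * Real.sqrt n := by
    rw [hc2]; calc ((n:ℝ) + 1) * u = N - 2*t := hNu
    _ < 2 * Real.sqrt n := h2
  have key := key_aux (Real.sqrt n) u hc hu0 hu1 hlt
  have hprod : t * (N - t) = (N / 2) ^ 2 * (1 - u ^ 2) := by
    rw [hudef]; field_simp; ring
  have hs : Real.sqrt (t * (N - t)) = (N / 2) * Real.sqrt (1 - u ^ 2) := by
    rw [hprod, Real.sqrt_mul (by positivity), Real.sqrt_sq (by positivity)]
  rw [hueq, abs_of_pos hu0, hs]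
  have heq : 2 * Real.sqrt n / N * ((N / 2) * Real.sqrt (1 - u ^ 2))
      = Real.sqrt n * Real.sqrt (1 - u ^ 2) := by field_simp
  rw [heq]; exact key

theorem max_psi_gt_sqrt (n : ℕ) (hn : 2 ≤ n)
    (ψ : ℝ → ℝ)
    (hψ : ∀ t, ψ t = (2 * Real.sqrt n / (n + 1)) * Real.sqrt (t * (n + 1 - t))
        + |1 - 2 * t / (n + 1)|)
    (a : ℤ) (ha : a = ⌊((n : ℝ) + 1) / 2 - Real.sqrt (n + 1) / 2⌋) :
    Real.sqrt n < max (ψ a) (ψ (a + 1)) := by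
  have hn2 : (2:ℝ) ≤ (n:ℝ) := by exact_mod_cast hn
  have hN : (0:ℝ) < (n:ℝ) + 1 := by linarith
  have hsN : Real.sqrt ((n:ℝ) + 1) * Real.sqrt ((n:ℝ) + 1) = (n:ℝ) + 1 :=
    Real.mul_self_sqrt (le_of_lt hN)
  have hsNpos : 0 < Real.sqrt ((n:ℝ) + 1) := Real.sqrt_pos.mpr hN
  have hsn : Real.sqrt (n:ℝ) * Real.sqrt (n:ℝ) = (n:ℝ) :=
    Real.mul_self_sqrt (by positivity)
  have hsn1 : 1 < Real.sqrt (n:ℝ) := by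
    have := Real.sqrt_lt_sqrt (by norm_num : (0:ℝ) ≤ 1) (by linarith : (1:ℝ) < (n:ℝ))
    simpa using this
  have hNlt : Real.sqrt ((n:ℝ) + 1) < 2 * Real.sqrt (n:ℝ) := by
    nlinarith [Real.sqrt_nonneg ((n:ℝ)+1), Real.sqrt_nonneg (n:ℝ)]
  have ha_le : (a:ℝ) ≤ ((n:ℝ) + 1) / 2 - Real.sqrt ((n:ℝ) + 1) / 2 := by
    rw [ha]; exact Int.floor_le _
  have ha_lt : ((n:ℝ) + 1) / 2 - Real.sqrt ((n:ℝ) + 1) / 2 < (a:ℝ) + 1 := by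
    rw [ha]; exact Int.lt_floor_add_one _
  have ha0 : (0:ℝ) ≤ (a:ℝ) := by
    have : (0:ℤ) ≤ a := by
      rw [ha]
      apply Int.le_floor.mpr
      push_cast
      nlinarith [hsN, hsNpos, sq_nonneg (Real.sqrt ((n:ℝ) + 1) - 1)]
    exact_mod_cast this
  by_cases hcase : (n:ℝ) + 1 - 2 * (a:ℝ) < 2 * Real.sqrt (n:ℝ)
  · refine lt_max_iff.mpr (Or.inl ?_)
    rw [hψ]
    exact psi_gt n hn (a:ℝ) ha0 (by linarith) hcase
  · push_neg at hcase
    refine lt_max_iff.mpr (Or.inr ?_)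
    rw [hψ]
    exact psi_gt n hn ((a:ℝ) + 1) (by linarith)
      (by linarith) (by linarith)
end

section
/- For a positive integer n, max{ψ(a), ψ(a+1)} = √(n+1) (with a = ⌊(n+1)/2 − √(n+1)/2⌋) if and only if n + 1 is a perfect square. -/
theorem max_psi_eq_sqrt_iff (n : ℕ) (hn : 1 ≤ n)
    (ψ : ℝ → ℝ)
    (hψ : ∀ t, ψ t = (2 * Real.sqrt n / (n + 1)) * Real.sqrt (t * (n + 1 - t))
        + |1 - 2 * t / (n + 1)|)
    (a : ℤ) (ha : a = ⌊((n : ℝ) + 1) / 2 - Real.sqrt (n + 1) / 2⌋) :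
    max (ψ a) (ψ (a + 1)) = Real.sqrt (n + 1) ↔ ∃ m : ℕ, n + 1 = m ^ 2 := by
  have hN2 : (2:ℝ) ≤ (n:ℝ) + 1 := by
    have : (1:ℝ) ≤ (n:ℝ) := by exact_mod_cast hn
    linarith
  set N : ℝ := (n : ℝ) + 1 with hNdef
  have hNpos : (0:ℝ) < N := by linarith
  set s : ℝ := Real.sqrt N with hsdef
  set r : ℝ := Real.sqrt n with hrdef
  have hs2 : s ^ 2 = N := Real.sq_sqrt hNpos.le
  have hr2 : r ^ 2 = (n:ℝ) := Real.sq_sqrt (Nat.cast_nonneg n)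
  have hr2' : r ^ 2 = N - 1 := by rw [hr2, hNdef]; ring
  have hsnn : 0 ≤ s := Real.sqrt_nonneg _
  have hrnn : 0 ≤ r := Real.sqrt_nonneg _
  have hspos : 0 < s := Real.sqrt_pos.mpr hNpos
  have hsleN : s ≤ N := by nlinarith
  -- key bound and equality characterization
  have key : ∀ t : ℝ, 0 ≤ t → t ≤ N →
      ψ t ≤ s ∧ (ψ t = s → t = (N - s)/2 ∨ t = (N + s)/2) := by
    intro t ht0 htN
    have hxnn : 0 ≤ Real.sqrt (t * (N - t)) := Real.sqrt_nonneg _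
    set x : ℝ := Real.sqrt (t * (N - t)) with hxdef
    have hx2 : x ^ 2 = t * (N - t) := Real.sq_sqrt (by nlinarith)
    set v : ℝ := |N - 2*t| with hvdef
    have hvnn : 0 ≤ v := abs_nonneg _
    have hv2 : v ^ 2 = (N - 2*t)^2 := sq_abs _
    have hsum : 4 * x^2 + v^2 = N^2 := by rw [hx2, hv2]; ring
    have habs : |1 - 2 * t / N| = v / N := by
      have h1 : 1 - 2*t/N = (N - 2*t)/N := by field_simp
      rw [h1, abs_div, abs_of_pos hNpos, hvdef]
    have hψt : ψ t = (2 * r * x + v) / N := by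
      rw [hψ, habs]
      ring
    have hle : 2 * r * x + v ≤ s * N := by
      nlinarith [sq_nonneg (r * v - 2 * x), sq_nonneg (2*r*x + v - s*N),
        mul_pos hspos hNpos, mul_nonneg hrnn hxnn]
    constructor
    · rw [hψt, div_le_iff₀ hNpos]
      linarith
    · intro heq
      rw [hψt, div_eq_iff hNpos.ne'] at heq
      have hsq : (2*r*x + v)^2 = s^2 * N^2 := by rw [heq]; ring
      have hz : (r*v - 2*x)^2 = 0 := by
        linear_combination (r^2+1)*hsum - hsq + N^2*hr2' - N^2*hs2
      have h2x : 2 * x = r * v := by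
        have := sq_eq_zero_iff.mp hz
        linarith
      have h4 : 4*x^2 = r^2*v^2 := by linear_combination (2*x + r*v) * h2x
      have hN4 : N * v^2 = N * N := by linear_combination hsum - h4 - v^2*hr2'
      have hv2N : v^2 = N := mul_left_cancel₀ hNpos.ne' hN4
      have hv : v = s := by rw [← Real.sqrt_sq hvnn, hv2N]
      rcases (abs_eq hsnn).mp (hvdef.symm.trans hv) with h | h
      · left; linarith
      · right; linarith
  -- floor facts
  have ht0 : (a:ℝ) ≤ N/2 - s/2 := by rw [ha]; exact Int.floor_le _
  have ht1 : N/2 - s/2 < (a:ℝ) + 1 := by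
    rw [ha]; exact Int.lt_floor_add_one _
  have ha0 : (0:ℝ) ≤ (a:ℝ) := by
    have : (0:ℤ) ≤ a := by
      rw [ha]; exact Int.floor_nonneg.mpr (by linarith)
    exact_mod_cast this
  have haN : (a:ℝ) + 1 ≤ N := by linarith
  -- helper: an integer whose cast is s gives a perfect square
  have mk : ∀ b : ℤ, (b:ℝ) = s → ∃ m : ℕ, n + 1 = m ^ 2 := by
    intro b hb
    have hbnn : (0:ℤ) ≤ b := by
      have : (0:ℝ) ≤ (b:ℝ) := by rw [hb]; exact hsnn
      exact_mod_cast this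
    have hb2 : ((b^2 : ℤ) : ℝ) = (((n:ℤ) + 1 : ℤ) : ℝ) := by
      push_cast
      rw [hb]
      rw [hs2, hNdef]
    have hb2' : b^2 = (n:ℤ) + 1 := by exact_mod_cast hb2
    refine ⟨b.toNat, ?_⟩
    have : ((n + 1 : ℕ) : ℤ) = ((b.toNat ^ 2 : ℕ) : ℤ) := by
      push_cast [Int.toNat_of_nonneg hbnn]
      omega
    exact_mod_cast this
  constructor
  · intro hmax
    have h1 := key (a:ℝ) ha0 (by linarith)
    have h2 := key ((a:ℝ)+1) (by linarith) haN
    have hor : ψ (a:ℝ) = s ∨ ψ ((a:ℝ)+1) = s := by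
      rcases le_max_iff.mp hmax.ge with h | h
      · exact Or.inl (le_antisymm h1.1 h)
      · exact Or.inr (le_antisymm h2.1 h)
    rcases hor with h | h
    · rcases h1.2 h with h' | h'
      · exact mk ((n:ℤ) + 1 - 2*a) (by push_cast; rw [← hNdef]; linarith)
      · exfalso; linarith
    · rcases h2.2 h with h' | h'
      · exfalso; linarith
      · exact mk (2*a + 2 - ((n:ℤ) + 1)) (by push_cast; rw [← hNdef]; linarith)
  · rintro ⟨m, hm⟩
    have hm2 : (m:ℝ)^2 = N := by
      rw [hNdef]
      exact_mod_cast hm.symm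
    have hsm : s = (m:ℝ) := by
      rw [hsdef, ← hm2, Real.sqrt_sq (Nat.cast_nonneg m)]
    obtain ⟨c, hc⟩ := Int.even_mul_succ_self ((m:ℤ) - 1)
    -- hc : (m - 1) * (m - 1 + 1) = c + c
    have hcR : ((m:ℝ) - 1) * ((m:ℝ) - 1 + 1) = (c:ℝ) + (c:ℝ) := by exact_mod_cast hc
    have hcval : (c:ℝ) = N/2 - s/2 := by
      rw [hsm, ← hm2]; linear_combination (-1/2 : ℝ) * hcR
    have hac : a = c := by
      rw [ha, ← hcval, Int.floor_intCast]
    have haR : (a:ℝ) = (N - s)/2 := by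
      rw [hac, hcval]; ring
    have hψa : ψ (a:ℝ) = s := by
      rw [hψ]
      have harg : (a:ℝ) * (N - (a:ℝ)) = (s*r/2)^2 := by
        rw [haR]
        linear_combination (-(1+r^2)/4) * hs2 + (-(N/4)) * hr2'
      have hsq : Real.sqrt ((a:ℝ) * (N - (a:ℝ))) = s*r/2 := by
        rw [harg, Real.sqrt_sq (by positivity)]
      rw [hsq]
      have hlin : 1 - 2 * (a:ℝ) / N = s / N := by
        rw [haR]; field_simp; ring
      rw [hlin, abs_of_nonneg (by positivity)]
      have hfin : 2 * r / N * (s * r / 2) + s / N = (r ^ 2 * s + s) / N := by ring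
      rw [hfin, hr2, div_eq_iff hNpos.ne', hNdef]
      ring
    have h2 : ψ ((a:ℝ)+1) ≤ ψ (a:ℝ) := by
      rw [hψa]
      exact (key ((a:ℝ)+1) (by linarith) haN).1
    rw [max_eq_left h2, hψa]
end

section
/- Let P : C(B) → Π₁(ℝⁿ) be the interpolation projector with nodes at the vertices x⁽¹⁾,…,x⁽ⁿ⁺¹⁾ of a nondegenerate simplex S ⊆ B, where B = B(x⁽⁰⁾; R) is a Euclidean ball. Then ‖P‖_B = max over sign choices f_j ∈ {−1, 1} of [ R·(Σᵢ₌₁ⁿ (Σⱼ₌₁ⁿ⁺¹ f_j l_{ij})²)^{1/2} + |Σⱼ₌₁ⁿ⁺¹ f_j λ_j(x⁽⁰⁾)| ], where λ_j(x) = l_{1j}x₁ + … + l_{nj}x_n + l_{n+1,j} are the basic Lagrange polynomials of S. -/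
open scoped RealInnerProductSpace

/-- Theorem 1: the norm of the interpolation projector on a Euclidean ball,
`‖P‖_B = max_{x∈B} Σ_j |λ_j(x)|`, equals
`max_{f_j = ±1} [ R·(Σ_i (Σ_j f_j l_{ij})²)^{1/2} + |Σ_j f_j λ_j(x⁰)| ]`. -/
theorem projector_norm_formula (n : ℕ) (hn : 1 ≤ n)
    (x0 : EuclideanSpace ℝ (Fin n)) (R : ℝ) (hR : 0 < R)
    (x : Fin (n + 1) → EuclideanSpace ℝ (Fin n))
    (hx : ∀ j, x j ∈ Metric.closedBall x0 R)
    (A : Matrix (Fin (n + 1)) (Fin (n + 1)) ℝ)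
    (hA : ∀ j, (∀ i : Fin n, A j i.castSucc = x j i) ∧ A j (Fin.last n) = 1)
    (hdet : IsUnit A.det)
    (L : Matrix (Fin (n + 1)) (Fin (n + 1)) ℝ) (hL : L = A⁻¹)
    (lam : Fin (n + 1) → EuclideanSpace ℝ (Fin n) → ℝ)
    (hlam : ∀ j y, lam j y = (∑ i : Fin n, L i.castSucc j * y i) + L (Fin.last n) j) :
    sSup {s : ℝ | ∃ y ∈ Metric.closedBall x0 R, s = ∑ j, |lam j y|} =
    sSup {s : ℝ | ∃ f : Fin (n + 1) → ℝ, (∀ j, f j = 1 ∨ f j = -1) ∧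
      s = R * Real.sqrt (∑ i : Fin n, (∑ j, f j * L i.castSucc j) ^ 2)
        + |∑ j, f j * lam j x0|} := by
  classical
  set Sl := {s : ℝ | ∃ y ∈ Metric.closedBall x0 R, s = ∑ j, |lam j y|} with hSl
  set Sr := {s : ℝ | ∃ f : Fin (n + 1) → ℝ, (∀ j, f j = 1 ∨ f j = -1) ∧
      s = R * Real.sqrt (∑ i : Fin n, (∑ j, f j * L i.castSucc j) ^ 2)
        + |∑ j, f j * lam j x0|} with hSr
  -- expansion of the linear functional
  have expand : ∀ (f : Fin (n+1) → ℝ) (y : EuclideanSpace ℝ (Fin n)),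
      ∑ j, f j * lam j y
        = (∑ i : Fin n, (∑ j, f j * L i.castSucc j) * y i)
          + ∑ j, f j * L (Fin.last n) j := by
    intro f y
    simp only [hlam, mul_add, Finset.sum_add_distrib, Finset.sum_mul]
    congr 1
    rw [Finset.sum_comm]
    refine Finset.sum_congr rfl fun i _ => ?_
    rw [Finset.mul_sum]
    exact Finset.sum_congr rfl fun j _ => by ring
  have hdiff : ∀ (f : Fin (n+1) → ℝ) (y : EuclideanSpace ℝ (Fin n)),
      ∑ j, f j * lam j y
        = (∑ i : Fin n, (∑ j, f j * L i.castSucc j) * (y i - x0 i))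
          + ∑ j, f j * lam j x0 := by
    intro f y
    rw [expand f y, expand f x0]
    simp only [mul_sub, Finset.sum_sub_distrib]
    ring
  -- norm of the coefficient vector
  have hnorm : ∀ w : EuclideanSpace ℝ (Fin n), ‖w‖ = Real.sqrt (∑ i, (w i)^2) := by
    intro w
    rw [EuclideanSpace.norm_eq]; simp [sq_abs]
  -- key upper bound
  have key : ∀ (f : Fin (n+1) → ℝ), ∀ y ∈ Metric.closedBall x0 R,
      ∑ j, f j * lam j y
        ≤ R * Real.sqrt (∑ i : Fin n, (∑ j, f j * L i.castSucc j) ^ 2)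
          + |∑ j, f j * lam j x0| := by
    intro f y hy
    set v : EuclideanSpace ℝ (Fin n) := WithLp.toLp 2 (fun i : Fin n => ∑ j, f j * L i.castSucc j) with hv
    have hCS : ∑ i : Fin n, v i * ((y - x0) i)
        ≤ Real.sqrt (∑ i, (v i)^2) * ‖y - x0‖ := by
      have h1 : ⟪v, y - x0⟫ = ∑ i, v i * ((y - x0) i) := by
        rw [PiLp.inner_apply]; simp [RCLike.inner_apply]
        exact Finset.sum_congr rfl fun i _ => mul_comm _ _
      have h2 : ‖v‖ = Real.sqrt (∑ i, (v i)^2) := by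
        rw [EuclideanSpace.norm_eq]; simp [sq_abs]
      rw [← h1, ← h2]
      exact real_inner_le_norm v (y - x0)
    have hyR : ‖y - x0‖ ≤ R := by
      rw [← dist_eq_norm]; exact Metric.mem_closedBall.mp hy
    have hsub : ∀ i : Fin n, (y - x0) i = y i - x0 i := fun i => rfl
    have hd := hdiff f y
    have hsqrt_nonneg : (0:ℝ) ≤ Real.sqrt (∑ i, (v i)^2) := Real.sqrt_nonneg _
    calc ∑ j, f j * lam j y
        = (∑ i : Fin n, v i * (y i - x0 i)) + ∑ j, f j * lam j x0 := hd
      _ ≤ Real.sqrt (∑ i, (v i)^2) * ‖y - x0‖ + ∑ j, f j * lam j x0 := by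
          refine add_le_add_left ?_ _
          simpa only [hsub] using hCS
      _ ≤ Real.sqrt (∑ i, (v i)^2) * R + |∑ j, f j * lam j x0| := by
          gcongr
          · exact le_abs_self _
      _ = R * Real.sqrt (∑ i, (v i)^2) + |∑ j, f j * lam j x0| := by ring
  -- Sr is finite, nonempty, bounded above
  have hTfin : Set.Finite {f : Fin (n+1) → ℝ | ∀ j, f j = 1 ∨ f j = -1} := by
    refine Set.Finite.subset
      (Set.Finite.pi (fun _ : Fin (n+1) =>
        (Set.finite_singleton (-1:ℝ)).insert 1)) ?_
    intro f hf j _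
    rcases hf j with h | h <;> simp [h]
  have hSrfin : Sr.Finite := by
    have : Sr ⊆ (fun f : Fin (n+1) → ℝ =>
        R * Real.sqrt (∑ i : Fin n, (∑ j, f j * L i.castSucc j) ^ 2)
          + |∑ j, f j * lam j x0|) '' {f | ∀ j, f j = 1 ∨ f j = -1} := by
      rintro s ⟨f, hf, rfl⟩
      exact ⟨f, hf, rfl⟩
    exact Set.Finite.subset (hTfin.image _) this
  have hSrne : Sr.Nonempty := ⟨_, fun _ => (1:ℝ), fun j => Or.inl rfl, rfl⟩
  have hSrbdd : BddAbove Sr := hSrfin.bddAbove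
  -- every element of Sl is bounded by sSup Sr
  have hSl_le : ∀ s ∈ Sl, s ≤ sSup Sr := by
    rintro s ⟨y, hy, rfl⟩
    set f : Fin (n+1) → ℝ := fun j => if 0 ≤ lam j y then 1 else -1 with hf
    have hfT : ∀ j, f j = 1 ∨ f j = -1 := by
      intro j; simp only [hf]; split_ifs <;> simp
    have h1 : ∑ j, |lam j y| = ∑ j, f j * lam j y := by
      refine Finset.sum_congr rfl fun j _ => ?_
      simp only [hf]
      split_ifs with h
      · rw [abs_of_nonneg h, one_mul]
      · rw [abs_of_neg (lt_of_not_ge h)]; ring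
    have hmem : R * Real.sqrt (∑ i : Fin n, (∑ j, f j * L i.castSucc j) ^ 2)
        + |∑ j, f j * lam j x0| ∈ Sr := ⟨f, hfT, rfl⟩
    calc ∑ j, |lam j y| = ∑ j, f j * lam j y := h1
      _ ≤ _ := key f y hy
      _ ≤ sSup Sr := le_csSup hSrbdd hmem
  have hSlne : Sl.Nonempty := ⟨_, x0, Metric.mem_closedBall_self hR.le, rfl⟩
  have hSlbdd : BddAbove Sl := ⟨sSup Sr, hSl_le⟩
  apply le_antisymm
  · exact csSup_le hSlne hSl_le
  · refine csSup_le hSrne ?_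
    rintro s ⟨f, hf, rfl⟩
    -- attainment: construct y achieving the bound
    set v : EuclideanSpace ℝ (Fin n) := WithLp.toLp 2 (fun i : Fin n => ∑ j, f j * L i.castSucc j) with hv
    set N : ℝ := ‖v‖ with hN
    have hN0 : 0 ≤ N := norm_nonneg v
    have hNsq : Real.sqrt (∑ i : Fin n, (∑ j, f j * L i.castSucc j) ^ 2) = N := by
      rw [hN, hnorm v]
    set c : ℝ := ∑ j, f j * lam j x0 with hc
    set ε : ℝ := if 0 ≤ c then 1 else -1 with hε
    have hεc : ε * c = |c| := by
      simp only [hε]; split_ifs with h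
      · rw [abs_of_nonneg h, one_mul]
      · rw [abs_of_neg (lt_of_not_ge h)]; ring
    have hεabs : |ε| = 1 := by
      simp only [hε]; split_ifs <;> simp
    set y : EuclideanSpace ℝ (Fin n) := x0 + (ε * R / N) • v with hy
    have hyB : y ∈ Metric.closedBall x0 R := by
      rw [Metric.mem_closedBall, dist_eq_norm]
      have : y - x0 = (ε * R / N) • v := by rw [hy]; abel
      rw [this, norm_smul]
      rcases eq_or_lt_of_le hN0 with h0 | h0
      · have h0' : ‖v‖ = 0 := by rw [← hN, ← h0]
        rw [h0']; simpa using hR.le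
      · have hN' : ‖v‖ ≠ 0 := by rw [← hN]; exact h0.ne'
        rw [Real.norm_eq_abs, abs_div, abs_mul, hεabs, one_mul, abs_of_pos hR,
          abs_of_nonneg (norm_nonneg v), div_mul_cancel₀ _ hN']
    have hyi : ∀ i : Fin n, y i - x0 i = (ε * R / N) * v i := by
      intro i
      show (x0 + (ε * R / N) • v) i - x0 i = _
      simp [PiLp.add_apply, PiLp.smul_apply, smul_eq_mul]
    have hvsq : ∑ i : Fin n, (v i)^2 = N^2 := by
      rw [hN, EuclideanSpace.norm_eq, Real.sq_sqrt (by positivity)]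
      simp [sq_abs]
    have hval : ∑ j, f j * lam j y = ε * R * N + c := by
      rw [hdiff f y, ← hc]
      congr 1
      have : ∑ i : Fin n, v i * (y i - x0 i) = (ε * R / N) * ∑ i, (v i)^2 := by
        rw [Finset.mul_sum]
        refine Finset.sum_congr rfl fun i _ => ?_
        rw [hyi i]; ring
      show ∑ i : Fin n, v i * (y i - x0 i) = ε * R * N
      rw [this, hvsq]
      rcases eq_or_lt_of_le hN0 with h0 | h0
      · rw [← h0]; ring
      · have hN' : N ≠ 0 := h0.ne'
        field_simp
    have habs : |∑ j, f j * lam j y| = R * N + |c| := by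
      rw [hval]
      have : ε * R * N + c = ε * (R * N + |c|) := by
        rw [mul_add, ← hεc]
        have hε2 : ε * ε = 1 := by simp only [hε]; split_ifs <;> norm_num
        calc ε * R * N + c = ε * (R * N) + (ε * ε) * c := by rw [hε2]; ring
          _ = ε * (R * N) + ε * (ε * c) := by ring
      rw [this, abs_mul, hεabs, one_mul, abs_of_nonneg (by positivity)]
    have hfinal : R * N + |c| ≤ ∑ j, |lam j y| := by
      rw [← habs]
      calc |∑ j, f j * lam j y| ≤ ∑ j, |f j * lam j y| := Finset.abs_sum_le_sum_abs _ _
        _ = ∑ j, |lam j y| := by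
            refine Finset.sum_congr rfl fun j _ => ?_
            rw [abs_mul]
            rcases hf j with h | h <;> simp [h]
    calc R * Real.sqrt (∑ i : Fin n, (∑ j, f j * L i.castSucc j) ^ 2) + |∑ j, f j * lam j x0|
        = R * N + |c| := by rw [hNsq]
      _ ≤ ∑ j, |lam j y| := hfinal
      _ ≤ sSup Sl := le_csSup hSlbdd ⟨y, hyB, rfl⟩
end
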